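/- arXiv:2208.14880 — 5 statements merged into one kernel-verified Lean document; each statement's English description precedes it below -/
import Mathlib

section
/- Let μ be a finite measure and h : X → ℝ≥0 a bounded measurable function with ∫ h^q dμ > 0 for all q ≥ 0. Then the function g(q) = (∫ h^{q+1} dμ)/(∫ h^q dμ) is monotone increasing on [0,∞). -/
open MeasureTheory

lemma aux_memLp {X : Type*} [MeasurableSpace X] (μ : Measure X)
    (h : X → ℝ) (hmeas : Measurable h) (hnonneg : ∀ x, 0 ≤ h x)
    (hint : ∀ q : ℝ, 0 ≤ q → Integrable (fun x => h x ^ q) μ)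
    (s r : ℝ) (hs : 0 ≤ s) (hr : 0 < r) :
    MemLp (fun x => h x ^ s) (ENNReal.ofReal r) μ := by
  have A : ENNReal.ofReal r ≠ 0 := by
    rwa [Ne, ENNReal.ofReal_eq_zero, not_le]
  have B : ENNReal.ofReal r ≠ ⊤ := ENNReal.ofReal_ne_top
  have hm2 : Measurable (fun x => h x ^ s) := by fun_prop
  have hsm : AEStronglyMeasurable (fun x => h x ^ s) μ := hm2.aestronglyMeasurable
  rw [← memLp_norm_rpow_iff hsm A B, ENNReal.toReal_ofReal hr.le,
    ENNReal.div_self A B, memLp_one_iff_integrable]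
  apply (hint (s * r) (mul_nonneg hs hr.le)).congr
  · filter_upwards with x
    rw [Real.norm_of_nonneg (Real.rpow_nonneg (hnonneg x) s),
      ← Real.rpow_mul (hnonneg x)]

lemma aux_interp {X : Type*} [MeasurableSpace X] (μ : Measure X)
    (h : X → ℝ) (hmeas : Measurable h) (hnonneg : ∀ x, 0 ≤ h x)
    (hint : ∀ q : ℝ, 0 ≤ q → Integrable (fun x => h x ^ q) μ)
    (a b t : ℝ) (ha : 0 ≤ a) (hb : 0 ≤ b) (ht : 0 < t) (ht1 : t < 1) :
    ∫ x, h x ^ ((1 - t) * a + t * b) ∂μ ≤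
      (∫ x, h x ^ a ∂μ) ^ (1 - t) * (∫ x, h x ^ b ∂μ) ^ t := by
  have h1t : 0 < 1 - t := by linarith
  have hconj : Real.HolderConjugate (1 / (1 - t)) (1 / t) := by
    constructor
    · rw [one_div, one_div, inv_inv, inv_inv]; ring
    · positivity
    · positivity
  have key := MeasureTheory.integral_mul_le_Lp_mul_Lq_of_nonneg hconj
    (f := fun x => h x ^ ((1 - t) * a)) (g := fun x => h x ^ (t * b))
    (Filter.Eventually.of_forall fun x => Real.rpow_nonneg (hnonneg x) _)
    (Filter.Eventually.of_forall fun x => Real.rpow_nonneg (hnonneg x) _)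
    (aux_memLp μ h hmeas hnonneg hint _ _ (mul_nonneg h1t.le ha) (by positivity))
    (aux_memLp μ h hmeas hnonneg hint _ _ (mul_nonneg ht.le hb) (by positivity))
  have e1 : ∀ x, h x ^ ((1 - t) * a) * h x ^ (t * b) = h x ^ ((1 - t) * a + t * b) :=
    fun x => (Real.rpow_add_of_nonneg (hnonneg x) (mul_nonneg h1t.le ha)
      (mul_nonneg ht.le hb)).symm
  have e2 : ∀ x, (h x ^ ((1 - t) * a)) ^ (1 / (1 - t)) = h x ^ a := by
    intro x
    rw [← Real.rpow_mul (hnonneg x)]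
    congr 1
    field_simp
  have e3 : ∀ x, (h x ^ (t * b)) ^ (1 / t) = h x ^ b := by
    intro x
    rw [← Real.rpow_mul (hnonneg x)]
    congr 1
    field_simp
  simp only [e1, e2, e3, one_div_one_div] at key
  exact key

/-- g(q) = (∫ h^{q+1})/(∫ h^q) is monotone increasing on [0,∞). -/
theorem stmt_4 {X : Type*} [MeasurableSpace X] (μ : Measure X) [IsFiniteMeasure μ]
    (h : X → ℝ) (hmeas : Measurable h) (hnonneg : ∀ x, 0 ≤ h x)
    (M : ℝ) (hbound : ∀ x, h x ≤ M)
    (hpos : ∀ q : ℝ, 0 ≤ q → 0 < ∫ x, h x ^ q ∂μ)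
    (hint : ∀ q : ℝ, 0 ≤ q → Integrable (fun x => h x ^ q) μ) :
    MonotoneOn (fun q : ℝ => (∫ x, h x ^ (q + 1) ∂μ) / (∫ x, h x ^ q ∂μ))
      (Set.Ici 0) := by
  intro p hp q hq hpq
  rcases eq_or_lt_of_le hpq with rfl | hlt
  · exact le_rfl
  simp only [Set.mem_Ici] at hp hq
  dsimp only
  set t : ℝ := 1 / (q + 1 - p) with ht_def
  have hd : 1 < q + 1 - p := by linarith
  have ht : 0 < t := by positivity
  have ht1 : t < 1 := by
    rw [ht_def, div_lt_one (by linarith)]; linarith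
  have hq1 : (0:ℝ) ≤ q + 1 := by linarith
  have hA := aux_interp μ h hmeas hnonneg hint p (q + 1) t hp hq1 ht ht1
  have hB := aux_interp μ h hmeas hnonneg hint (q + 1) p t hq1 hp ht ht1
  have eA : (1 - t) * p + t * (q + 1) = p + 1 := by
    rw [ht_def]; field_simp; ring
  have eB : (1 - t) * (q + 1) + t * p = q := by
    rw [ht_def]; field_simp; ring
  rw [eA] at hA
  rw [eB] at hB
  have Fp := hpos p hp
  have Fq := hpos q hq
  have Fp1 := hpos (p + 1) (by linarith)
  have Fq1 := hpos (q + 1) hq1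
  rw [div_le_div_iff₀ Fp Fq]
  calc (∫ x, h x ^ (p + 1) ∂μ) * ∫ x, h x ^ q ∂μ
      ≤ ((∫ x, h x ^ p ∂μ) ^ (1 - t) * (∫ x, h x ^ (q + 1) ∂μ) ^ t) *
        ((∫ x, h x ^ (q + 1) ∂μ) ^ (1 - t) * (∫ x, h x ^ p ∂μ) ^ t) :=
        mul_le_mul hA hB (hpos q hq).le (by positivity)
    _ = ((∫ x, h x ^ p ∂μ) ^ (1 - t) * (∫ x, h x ^ p ∂μ) ^ t) *
        ((∫ x, h x ^ (q + 1) ∂μ) ^ t * (∫ x, h x ^ (q + 1) ∂μ) ^ (1 - t)) := by ring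
    _ = (∫ x, h x ^ (q + 1) ∂μ) * ∫ x, h x ^ p ∂μ := by
        rw [← Real.rpow_add Fp, ← Real.rpow_add Fq1]
        norm_num
        ring
end

section
/- The function ψ(x,y,z) = sin(2π(x+y)) − cos(2π(y−z)) − sin(2π(x+z)) on ℝ³ satisfies sup |ψ_−| = 3/2, where ψ_− = max(−ψ, 0) is the negative part of ψ. -/
open Real

lemma key0 (t d : ℝ) : Real.sin (t+d) + Real.sin (t-d) + Real.cos (2*t) ≤ 3/2 := by
  rw [Real.sin_add, Real.sin_sub, Real.cos_two_mul]
  have h1 := Real.sin_sq_add_cos_sq t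
  have h2 := Real.neg_one_le_cos d
  have h3 := Real.cos_le_one d
  nlinarith [sq_nonneg (Real.sin t - 1/2), sq_nonneg (Real.sin t + 1/2),
    sq_nonneg (Real.cos d)]

lemma key_ineq (α β : ℝ) : Real.sin α + Real.sin β + Real.cos (α + β) ≤ 3/2 := by
  have h := key0 ((α+β)/2) ((α-β)/2)
  rw [show (α+β)/2 + (α-β)/2 = α from by ring,
      show (α+β)/2 - (α-β)/2 = β from by ring,
      show 2*((α+β)/2) = α + β from by ring] at h
  exact h

/-- sup |ψ₋| = 3/2 for ψ(x,y,z) = sin(2π(x+y)) − cos(2π(y−z)) − sin(2π(x+z)). -/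
theorem stmt_7 :
    sSup (Set.range (fun p : ℝ × ℝ × ℝ =>
      max (-(sin (2*π*(p.1 + p.2.1)) - cos (2*π*(p.2.1 - p.2.2))
              - sin (2*π*(p.1 + p.2.2)))) 0)) = 3/2 := by
  have hb : ∀ p : ℝ × ℝ × ℝ,
      max (-(sin (2*π*(p.1 + p.2.1)) - cos (2*π*(p.2.1 - p.2.2))
              - sin (2*π*(p.1 + p.2.2)))) 0 ≤ 3/2 := by
    rintro ⟨x, y, z⟩
    have h := key_ineq (-(2*π*(x+y))) (2*π*(x+z))
    rw [Real.sin_neg] at h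
    have he : (-(2*π*(x+y)) + 2*π*(x+z)) = -(2*π*(y-z)) := by ring
    rw [he, Real.cos_neg] at h
    apply max_le
    · simp only
      linarith
    · norm_num
  have hBdd : BddAbove (Set.range (fun p : ℝ × ℝ × ℝ =>
      max (-(sin (2*π*(p.1 + p.2.1)) - cos (2*π*(p.2.1 - p.2.2))
              - sin (2*π*(p.1 + p.2.2)))) 0)) := by
    refine ⟨3/2, ?_⟩
    rintro v ⟨p, rfl⟩
    exact hb p
  apply le_antisymm
  · apply csSup_le ⟨_, Set.mem_range_self ((0,0,0) : ℝ × ℝ × ℝ)⟩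
    rintro v ⟨p, rfl⟩
    exact hb p
  · have hmem : (3/2 : ℝ) ∈ Set.range (fun p : ℝ × ℝ × ℝ =>
        max (-(sin (2*π*(p.1 + p.2.1)) - cos (2*π*(p.2.1 - p.2.2))
                - sin (2*π*(p.1 + p.2.2)))) 0) := by
      refine ⟨(0, -1/12, 1/12), ?_⟩
      simp only
      have e1 : 2*π*((0:ℝ) + -1/12) = -(π/6) := by ring
      have e2 : 2*π*((-1/12:ℝ) - 1/12) = -(π/3) := by ring
      have e3 : 2*π*((0:ℝ) + 1/12) = π/6 := by ring
      rw [e1, e2, e3, Real.sin_neg, Real.cos_neg, Real.sin_pi_div_six, Real.cos_pi_div_three]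
      norm_num
    exact le_csSup hBdd hmem
end

section
/- The function ψ(x,y,z) = sin(2π(x+y)) − cos(2π(y−z)) − sin(2π(x+z)) satisfies ψ(x,y,z) ≥ −3/2 for all (x,y,z) ∈ ℝ³. -/
open Real

/-- ψ(x,y,z) ≥ −3/2 for all (x,y,z) ∈ ℝ³. -/
theorem stmt_8 (x y z : ℝ) :
    -(3/2 : ℝ) ≤ sin (2*π*(x+y)) - cos (2*π*(y-z)) - sin (2*π*(x+z)) := by
  have h : 2*π*(y-z) = 2*π*(x+y) - 2*π*(x+z) := by ring
  rw [h]
  set a := 2*π*(x+y)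
  set c := 2*π*(x+z)
  have h1 : sin a - sin c = 2 * sin ((a - c)/2) * cos ((a + c)/2) :=
    Real.sin_sub_sin a c
  have h2 : cos (a - c) = 1 - 2 * sin ((a - c)/2) ^ 2 := by
    have h4 := Real.cos_two_mul' ((a - c)/2)
    rw [show 2 * ((a - c)/2) = a - c by ring] at h4
    have h3 := Real.sin_sq_add_cos_sq ((a - c)/2)
    linarith
  set t := sin ((a - c)/2)
  set u := cos ((a + c)/2)
  have hu : u^2 ≤ 1 := by
    have := Real.sin_sq_add_cos_sq ((a + c)/2)
    nlinarith [sq_nonneg (sin ((a + c)/2))]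
  nlinarith [sq_nonneg (2*t + u)]
end

section
/- Let μ be a finite measure and a, b : X → ℝ≥0 bounded measurable functions with a, b ≤ M, a strictly positive on a set of positive measure, and suppose that for some fixed p ≥ 1, (∫ a^{p−1} dμ)/(∫ a^p dμ) + (∫ b^{p+1} dμ)/(∫ b^p dμ) < 2 (with all integrals positive). Then (∫ a^p log a dμ)/(∫ a^p dμ) − (∫ b^p log b dμ)/(∫ b^p dμ) > 0. -/
open MeasureTheory Real

lemma aux_bound_14 (M p : ℝ) (hp : 1 ≤ p) (x : ℝ) (hx : 0 ≤ x) (hxM : x ≤ M) :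
    |x ^ p * log x| ≤ 1 + (max M 1) ^ (p + 1) := by
  have hM1 : (0:ℝ) ≤ max M 1 := le_trans zero_le_one (le_max_right _ _)
  have hR : (0:ℝ) ≤ (max M 1) ^ (p + 1) := Real.rpow_nonneg hM1 _
  rcases eq_or_lt_of_le hx with h0 | h0
  · rw [← h0, Real.zero_rpow (by linarith : p ≠ 0), zero_mul, abs_zero]
    linarith
  rcases le_or_gt x 1 with h1 | h1
  · have hxp : x ^ p ≤ x := by
      calc x ^ p ≤ x ^ (1:ℝ) := Real.rpow_le_rpow_of_exponent_ge h0 h1 hp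
      _ = x := Real.rpow_one x
    have hlt := Real.abs_log_mul_self_lt x h0 h1
    have habs : |x ^ p * log x| ≤ |x * log x| := by
      rw [abs_mul, abs_mul]
      have : |x ^ p| ≤ |x| := by
        rwa [abs_of_nonneg (Real.rpow_nonneg hx p), abs_of_nonneg h0.le]
      exact mul_le_mul_of_nonneg_right this (abs_nonneg _)
    calc |x ^ p * log x| ≤ |x * log x| := habs
    _ = |log x * x| := by rw [mul_comm]
    _ ≤ 1 := hlt.le
    _ ≤ _ := by linarith
  · have hlog : 0 ≤ log x := Real.log_nonneg h1.le
    have hxpos : 0 < x := lt_trans one_pos h1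
    have key : x ^ p * log x ≤ x ^ (p+1) := by
      have hlx : log x ≤ x := (Real.log_le_sub_one_of_pos hxpos).trans (by linarith)
      calc x ^ p * log x ≤ x ^ p * x :=
            mul_le_mul_of_nonneg_left hlx (Real.rpow_nonneg hx p)
      _ = x ^ (p+1) := (Real.rpow_add_one (ne_of_gt hxpos) p).symm
    have h2 : x ^ (p+1) ≤ (max M 1) ^ (p+1) :=
      Real.rpow_le_rpow hx (le_max_of_le_left hxM) (by linarith)
    rw [abs_of_nonneg (mul_nonneg (Real.rpow_nonneg hx p) hlog)]
    linarith

lemma aux_integrable_14 {X : Type*} [MeasurableSpace X] (μ : Measure X) [IsFiniteMeasure μ]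
    (f : X → ℝ) (hf : Measurable f) (C : ℝ) (hC : ∀ x, ‖f x‖ ≤ C) :
    Integrable f μ :=
  (integrable_const C).mono' hf.aestronglyMeasurable (ae_of_all _ hC)

/-- If (∫ a^{p−1})/(∫ a^p) + (∫ b^{p+1})/(∫ b^p) < 2 then
    (∫ a^p log a)/(∫ a^p) − (∫ b^p log b)/(∫ b^p) > 0. -/
theorem stmt_14 {X : Type*} [MeasurableSpace X] (μ : Measure X) [IsFiniteMeasure μ]
    (a b : X → ℝ) (hameas : Measurable a) (hbmeas : Measurable b)
    (hanonneg : ∀ x, 0 ≤ a x) (hbnonneg : ∀ x, 0 ≤ b x)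
    (M : ℝ) (haM : ∀ x, a x ≤ M) (hbM : ∀ x, b x ≤ M)
    (hapos : 0 < μ {x | 0 < a x})
    (p : ℝ) (hp : 1 ≤ p)
    (hpos1 : 0 < ∫ x, a x ^ p ∂μ) (hpos2 : 0 < ∫ x, b x ^ p ∂μ)
    (hpos3 : 0 < ∫ x, a x ^ (p - 1) ∂μ) (hpos4 : 0 < ∫ x, b x ^ (p + 1) ∂μ)
    (hratio : (∫ x, a x ^ (p - 1) ∂μ) / (∫ x, a x ^ p ∂μ)
            + (∫ x, b x ^ (p + 1) ∂μ) / (∫ x, b x ^ p ∂μ) < 2) :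
    0 < (∫ x, a x ^ p * log (a x) ∂μ) / (∫ x, a x ^ p ∂μ)
      - (∫ x, b x ^ p * log (b x) ∂μ) / (∫ x, b x ^ p ∂μ) := by
  -- M is nonnegative
  have hM : 0 ≤ M := by
    by_contra h
    push_neg at h
    have : {x | 0 < a x} = ∅ := by
      ext x; simp only [Set.mem_setOf_eq, Set.mem_empty_iff_false, iff_false]
      have := haM x; have := hanonneg x; intro hx; linarith
    rw [this] at hapos; simp at hapos
  -- integrability lemmas
  have key : ∀ (f : X → ℝ), Measurable f → (∀ x, 0 ≤ f x) → (∀ x, f x ≤ M) →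
      ∀ q : ℝ, 0 ≤ q → Integrable (fun x => f x ^ q) μ := by
    intro f hf h0 hM' q hq
    apply aux_integrable_14 μ _ ((Real.continuous_rpow_const hq).measurable.comp hf) (M ^ q)
    intro x
    show |f x ^ q| ≤ M ^ q
    rw [abs_of_nonneg (Real.rpow_nonneg (h0 x) q)]
    exact Real.rpow_le_rpow (h0 x) (hM' x) hq
  have keylog : ∀ (f : X → ℝ), Measurable f → (∀ x, 0 ≤ f x) → (∀ x, f x ≤ M) →
      Integrable (fun x => f x ^ p * log (f x)) μ := by
    intro f hf h0 hM'
    apply aux_integrable_14 μ _ ((((Real.continuous_rpow_const (by linarith : (0:ℝ) ≤ p)).measurable.comp hf)).mul (Real.measurable_log.comp hf))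
      (1 + (max M 1) ^ (p+1))
    intro x
    show |f x ^ p * log (f x)| ≤ _
    exact aux_bound_14 M p hp (f x) (h0 x) (hM' x)
  have iap : Integrable (fun x => a x ^ p) μ := key a hameas hanonneg haM p (by linarith)
  have iapm : Integrable (fun x => a x ^ (p-1)) μ :=
    key a hameas hanonneg haM (p-1) (by linarith)
  have ibp : Integrable (fun x => b x ^ p) μ := key b hbmeas hbnonneg hbM p (by linarith)
  have ibpp : Integrable (fun x => b x ^ (p+1)) μ :=
    key b hbmeas hbnonneg hbM (p+1) (by linarith)
  have ial : Integrable (fun x => a x ^ p * log (a x)) μ := keylog a hameas hanonneg haM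
  have ibl : Integrable (fun x => b x ^ p * log (b x)) μ := keylog b hbmeas hbnonneg hbM
  -- pointwise inequality for a
  have hA : ∀ x, a x ^ p - a x ^ (p - 1) ≤ a x ^ p * log (a x) := by
    intro x
    rcases eq_or_lt_of_le (hanonneg x) with h0 | h0
    · rw [← h0, Real.zero_rpow (by linarith : p ≠ 0), zero_mul, zero_sub]
      have : (0:ℝ) ≤ (0:ℝ) ^ (p-1) := Real.rpow_nonneg le_rfl _
      linarith
    · have hlog : 1 - 1 / a x ≤ log (a x) := by
        have h := Real.log_le_sub_one_of_pos (show 0 < 1 / a x by positivity)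
        rw [Real.log_div one_ne_zero (ne_of_gt h0), Real.log_one] at h
        linarith
      have hmul := mul_le_mul_of_nonneg_left hlog (Real.rpow_nonneg (hanonneg x) p)
      have heq : a x ^ (p-1) = a x ^ p / a x := by
        rw [Real.rpow_sub h0, Real.rpow_one]
      have expand : a x ^ p * (1 - 1 / a x) = a x ^ p - a x ^ p / a x := by
        rw [mul_sub, mul_one, mul_one_div]
      rw [heq]
      linarith
  -- pointwise inequality for b
  have hB : ∀ x, b x ^ p * log (b x) ≤ b x ^ (p + 1) - b x ^ p := by
    intro x
    rcases eq_or_lt_of_le (hbnonneg x) with h0 | h0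
    · rw [← h0, Real.zero_rpow (by linarith : p ≠ 0),
        Real.zero_rpow (by linarith : p + 1 ≠ 0), zero_mul, sub_zero]
    · have hlog : log (b x) ≤ b x - 1 := Real.log_le_sub_one_of_pos h0
      have hmul := mul_le_mul_of_nonneg_left hlog (Real.rpow_nonneg (hbnonneg x) p)
      have heq : b x ^ (p+1) = b x ^ p * b x := Real.rpow_add_one (ne_of_gt h0) p
      have expand : b x ^ p * (b x - 1) = b x ^ p * b x - b x ^ p := by ring
      rw [heq]
      linarith
  -- integral inequalities
  have hIa : (∫ x, a x ^ p ∂μ) - (∫ x, a x ^ (p-1) ∂μ) ≤ ∫ x, a x ^ p * log (a x) ∂μ := by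
    rw [← integral_sub iap iapm]
    exact integral_mono (iap.sub iapm) ial hA
  have hIb : (∫ x, b x ^ p * log (b x) ∂μ) ≤ (∫ x, b x ^ (p+1) ∂μ) - (∫ x, b x ^ p ∂μ) := by
    rw [← integral_sub ibpp ibp]
    exact integral_mono ibl (ibpp.sub ibp) hB
  -- arithmetic
  set Ia := ∫ x, a x ^ p ∂μ
  set Ka := ∫ x, a x ^ (p-1) ∂μ
  set La := ∫ x, a x ^ p * log (a x) ∂μ
  set Ib := ∫ x, b x ^ p ∂μ
  set Kb := ∫ x, b x ^ (p+1) ∂μ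
  set Lb := ∫ x, b x ^ p * log (b x) ∂μ
  have h1 : 1 - Ka / Ia ≤ La / Ia := by
    have : (Ia - Ka) / Ia ≤ La / Ia := by gcongr
    rwa [sub_div, div_self (ne_of_gt hpos1)] at this
  have h2 : Lb / Ib ≤ Kb / Ib - 1 := by
    have : Lb / Ib ≤ (Kb - Ib) / Ib := by gcongr
    rwa [sub_div, div_self (ne_of_gt hpos2)] at this
  linarith
end

section
/- Let μ be a finite measure and h : X → ℝ≥0 bounded measurable with ∫ h^p dμ ∈ (0,∞) for all p ≥ 0. Then the function F(p) = (∫ h^p dμ)/(∫ h^{p−1} dμ) defined for p ≥ 1 satisfies F(p) ≤ F(p+ε) for all ε > 0 and p ≥ 1. -/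
open MeasureTheory
open scoped ENNReal

lemma holder_aux {X : Type*} [MeasurableSpace X] (μ : Measure X)
    (f : X → ℝ≥0∞) (hf : Measurable f) {a b t : ℝ} (ha : 0 ≤ a) (hb : 0 ≤ b)
    (ht : 0 < t) (ht1 : t < 1) :
    ∫⁻ x, f x ^ (t * a + (1 - t) * b) ∂μ
      ≤ (∫⁻ x, f x ^ a ∂μ) ^ t * (∫⁻ x, f x ^ b ∂μ) ^ (1 - t) := by
  have ht1' : 0 < 1 - t := by linarith
  have hpq : (1/t).HolderConjugate (1/(1-t)) := by
    rw [Real.holderConjugate_iff]; constructor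
    · rw [lt_div_iff₀ ht]; linarith
    · simp only [one_div, inv_inv]; ring
  have H := ENNReal.lintegral_mul_le_Lp_mul_Lq μ hpq
    ((hf.pow_const (t * a)).aemeasurable) ((hf.pow_const ((1 - t) * b)).aemeasurable)
  have e1 : ∀ x : ℝ≥0∞, (x ^ (t * a)) ^ (1/t) = x ^ a := fun x => by
    rw [← ENNReal.rpow_mul]; congr 1; field_simp
  have e2 : ∀ x : ℝ≥0∞, (x ^ ((1 - t) * b)) ^ (1/(1-t)) = x ^ b := fun x => by
    rw [← ENNReal.rpow_mul]; congr 1; field_simp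
  have e3 : ∀ x : ℝ≥0∞, x ^ (t * a) * x ^ ((1 - t) * b) = x ^ (t * a + (1 - t) * b) :=
    fun x => (ENNReal.rpow_add_of_nonneg _ _ (mul_nonneg ht.le ha)
      (mul_nonneg ht1'.le hb)).symm
  simpa only [Pi.mul_apply, e1, e2, e3, one_div_one_div] using H

/-- F(p) = (∫ h^p)/(∫ h^{p−1}) satisfies F(p) ≤ F(p+ε) for all ε > 0, p ≥ 1. -/
theorem stmt_16 {X : Type*} [MeasurableSpace X] (μ : Measure X) [IsFiniteMeasure μ]
    (h : X → ℝ) (hmeas : Measurable h) (hnonneg : ∀ x, 0 ≤ h x)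
    (M : ℝ) (hbound : ∀ x, h x ≤ M)
    (hfin : ∀ p : ℝ, 0 ≤ p → Integrable (fun x => h x ^ p) μ)
    (hpos : ∀ p : ℝ, 0 ≤ p → 0 < ∫ x, h x ^ p ∂μ) :
    ∀ p ε : ℝ, 1 ≤ p → 0 < ε →
      (∫ x, h x ^ p ∂μ) / (∫ x, h x ^ (p - 1) ∂μ)
        ≤ (∫ x, h x ^ (p + ε) ∂μ) / (∫ x, h x ^ (p + ε - 1) ∂μ) := by
  intro p ε hp hε
  set f : X → ℝ≥0∞ := fun x => ENNReal.ofReal (h x) with hf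
  have hfm : Measurable f := ENNReal.measurable_ofReal.comp hmeas
  -- φ q := lintegral of f^q equals ofReal of the real integral
  have key : ∀ q : ℝ, 0 ≤ q →
      ∫⁻ x, f x ^ q ∂μ = ENNReal.ofReal (∫ x, h x ^ q ∂μ) := by
    intro q hq
    rw [MeasureTheory.ofReal_integral_eq_lintegral_ofReal (hfin q hq)
      (Filter.Eventually.of_forall fun x => Real.rpow_nonneg (hnonneg x) q)]
    congr 1
    ext x
    exact ENNReal.ofReal_rpow_of_nonneg (hnonneg x) hq
  set t : ℝ := ε / (1 + ε) with htdef
  have ht : 0 < t := by positivity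
  have ht1 : t < 1 := by
    rw [htdef, div_lt_one (by linarith)]; linarith
  have hp1 : (0:ℝ) ≤ p - 1 := by linarith
  have hpε : (0:ℝ) ≤ p + ε := by linarith
  have h1 : ∫⁻ x, f x ^ p ∂μ
      ≤ (∫⁻ x, f x ^ (p-1) ∂μ) ^ t * (∫⁻ x, f x ^ (p+ε) ∂μ) ^ (1-t) := by
    have := holder_aux μ f hfm hp1 hpε ht ht1
    have heq : t * (p - 1) + (1 - t) * (p + ε) = p := by
      field_simp [htdef]; linarith [show t * (1 + ε) = ε from by rw [htdef]; exact div_mul_cancel₀ _ (by linarith)]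
    rwa [heq] at this
  have h2 : ∫⁻ x, f x ^ (p+ε-1) ∂μ
      ≤ (∫⁻ x, f x ^ (p-1) ∂μ) ^ (1-t) * (∫⁻ x, f x ^ (p+ε) ∂μ) ^ t := by
    have h1t : 0 < 1 - t := by linarith
    have := holder_aux μ f hfm hp1 hpε h1t (by linarith)
    have heq : (1 - t) * (p - 1) + (1 - (1 - t)) * (p + ε) = p + ε - 1 := by
      field_simp [htdef]; linarith [show t * (1 + ε) = ε from by rw [htdef]; exact div_mul_cancel₀ _ (by linarith)]
    rwa [heq, sub_sub_cancel] at this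
  -- positivity and finiteness of the lintegrals
  have hA := hpos p (by linarith)
  have hB := hpos (p-1) hp1
  have hC := hpos (p+ε) hpε
  have hD := hpos (p+ε-1) (by linarith)
  have hBne : (∫⁻ x, f x ^ (p-1) ∂μ) ≠ 0 := by
    rw [key _ hp1]; exact (ENNReal.ofReal_pos.mpr hB).ne'
  have hBtop : (∫⁻ x, f x ^ (p-1) ∂μ) ≠ ⊤ := by rw [key _ hp1]; exact ENNReal.ofReal_ne_top
  have hCne : (∫⁻ x, f x ^ (p+ε) ∂μ) ≠ 0 := by
    rw [key _ hpε]; exact (ENNReal.ofReal_pos.mpr hC).ne'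
  have hCtop : (∫⁻ x, f x ^ (p+ε) ∂μ) ≠ ⊤ := by rw [key _ hpε]; exact ENNReal.ofReal_ne_top
  have hmul : (∫⁻ x, f x ^ p ∂μ) * (∫⁻ x, f x ^ (p+ε-1) ∂μ)
      ≤ (∫⁻ x, f x ^ (p-1) ∂μ) * (∫⁻ x, f x ^ (p+ε) ∂μ) := by
    calc (∫⁻ x, f x ^ p ∂μ) * (∫⁻ x, f x ^ (p+ε-1) ∂μ)
        ≤ ((∫⁻ x, f x ^ (p-1) ∂μ) ^ t * (∫⁻ x, f x ^ (p+ε) ∂μ) ^ (1-t))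
          * ((∫⁻ x, f x ^ (p-1) ∂μ) ^ (1-t) * (∫⁻ x, f x ^ (p+ε) ∂μ) ^ t) :=
          mul_le_mul' h1 h2
      _ = (∫⁻ x, f x ^ (p-1) ∂μ) ^ (t + (1-t)) * (∫⁻ x, f x ^ (p+ε) ∂μ) ^ ((1-t) + t) := by
          rw [ENNReal.rpow_add _ _ hBne hBtop, ENNReal.rpow_add _ _ hCne hCtop]; ring
      _ = (∫⁻ x, f x ^ (p-1) ∂μ) * (∫⁻ x, f x ^ (p+ε) ∂μ) := by
          simp
  rw [key _ (by linarith : (0:ℝ) ≤ p), key _ hp1, key _ hpε, key _ (by linarith : (0:ℝ) ≤ p+ε-1),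
    ← ENNReal.ofReal_mul hA.le, ← ENNReal.ofReal_mul hB.le,
    ENNReal.ofReal_le_ofReal_iff (by positivity)] at hmul
  rw [div_le_div_iff₀ hB hD]
  linarith [hmul]
end
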